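/- Let p be prime, n ≥ 2, and consider skew-symmetric n×n matrices over ℤ/p under the congruence action D ↦ AᵀDA of GL(n, ℤ/p). The orbit of the standard rank-2 matrix D_n(1) (with 1 at position (2,1), -1 at (1,2), zeros elsewhere) has cardinality (p^{n-1} − 1)(p^n − 1)/(p² − 1). -/

import Mathlib

open Matrix

section CardOrbitAux

variable {p n : ℕ}

/-- The "wedge" matrix of two vectors: `(wdg v w) i j = w i * v j - v i * w j`. -/
def wdg (v w : Fin n → ZMod p) : Matrix (Fin n) (Fin n) (ZMod p) :=
  Matrix.of fun i j => w i * v j - v i * w j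

theorem wdg_congr (A : Matrix (Fin n) (Fin n) (ZMod p)) (v w : Fin n → ZMod p) :
    Aᵀ * wdg v w * A = wdg (v ᵥ* A) (w ᵥ* A) := by
  ext i j
  simp only [Matrix.mul_apply, Matrix.transpose_apply, wdg, Matrix.of_apply, Matrix.vecMul,
    dotProduct, sub_mul, mul_sub, Finset.sum_sub_distrib, Finset.sum_mul, Finset.mul_sum]
  congr 1 <;>
    exact Finset.sum_congr rfl fun l _ => Finset.sum_congr rfl fun k _ => by ring

theorem wdg_comb (a b c d : ZMod p) (v w : Fin n → ZMod p) :
    wdg (a • v + b • w) (c • v + d • w) = (a * d - b * c) • wdg v w := by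
  ext i j
  simp only [wdg, Matrix.of_apply, Matrix.smul_apply, Pi.add_apply, Pi.smul_apply, smul_eq_mul]
  ring

theorem wdg_mulVec (v w x : Fin n → ZMod p) :
    (wdg v w).mulVec x = (v ⬝ᵥ x) • w - (w ⬝ᵥ x) • v := by
  funext i
  simp only [Matrix.mulVec, wdg, Matrix.of_apply, dotProduct, Pi.sub_apply, Pi.smul_apply,
    smul_eq_mul, sub_mul, Finset.sum_sub_distrib]
  congr 1 <;> rw [Finset.sum_mul] <;> exact Finset.sum_congr rfl fun k _ => by ring

theorem li_comb [Fact p.Prime] {v w : Fin n → ZMod p}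
    (hvw : LinearIndependent (ZMod p) ![v, w]) {a b c d : ZMod p} (hdet : a * d - b * c = 1) :
    LinearIndependent (ZMod p) ![a • v + b • w, c • v + d • w] := by
  rw [LinearIndependent.pair_iff] at hvw ⊢
  intro x y h
  have h' : (x * a + y * c) • v + (x * b + y * d) • w = 0 := by
    linear_combination (norm := module) h
  obtain ⟨h1, h2⟩ := hvw _ _ h'
  constructor
  · linear_combination d * h1 - c * h2 - x * hdet
  · linear_combination a * h2 - b * h1 - y * hdet

theorem wdg_ne_zero [Fact p.Prime] {v w : Fin n → ZMod p}
    (hvw : LinearIndependent (ZMod p) ![v, w]) : wdg v w ≠ 0 := by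
  intro h
  have hv : v ≠ 0 := by simpa using hvw.ne_zero 0
  obtain ⟨j, hj⟩ : ∃ j, v j ≠ 0 := by
    by_contra hc; push_neg at hc; exact hv (funext hc)
  have hrel : ∀ i, w i = (w j / v j) * v i := by
    intro i
    have h0 : w i * v j - v i * w j = 0 := by
      simpa [wdg] using congrFun (congrFun h i) j
    field_simp
    linear_combination h0
  obtain ⟨h1, h2⟩ := LinearIndependent.pair_iff.mp hvw (w j / v j) (-1)
    (by funext i; simp [hrel i])
  exact one_ne_zero (neg_eq_zero.mp h2)

theorem exists_GL_rows [Fact p.Prime] (hn : 2 ≤ n) (s : Fin 2 → Fin n → ZMod p)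
    (hs : LinearIndependent (ZMod p) s) :
    ∃ A : GL (Fin n) (ZMod p),
      (A : Matrix (Fin n) (Fin n) (ZMod p)) ⟨0, by omega⟩ = s 0 ∧
      (A : Matrix (Fin n) (Fin n) (ZMod p)) ⟨1, by omega⟩ = s 1 := by
  have key : ∀ k, 2 ≤ k → k ≤ n → ∃ u : Fin k → Fin n → ZMod p,
      LinearIndependent (ZMod p) u ∧
      (∀ h : 0 < k, u ⟨0, h⟩ = s 0) ∧ (∀ h : 1 < k, u ⟨1, h⟩ = s 1) := by
    intro k hk
    induction k, hk using Nat.le_induction with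
    | base => exact fun _ => ⟨s, hs, fun _ => rfl, fun _ => rfl⟩
    | succ k hk ih =>
      intro hkn
      obtain ⟨u, hu, h0, h1⟩ := ih (by omega)
      obtain ⟨x, hx⟩ := exists_linearIndependent_snoc_of_lt_finrank hu
        (by rw [Module.finrank_fintype_fun_eq_card, Fintype.card_fin]; omega)
      refine ⟨Fin.snoc u x, hx, fun h => ?_, fun h => ?_⟩
      · have : (⟨0, h⟩ : Fin (k + 1)) = Fin.castSucc ⟨0, by omega⟩ := rfl
        rw [this, Fin.snoc_castSucc]; exact h0 _
      · have : (⟨1, h⟩ : Fin (k + 1)) = Fin.castSucc ⟨1, by omega⟩ := rfl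
        rw [this, Fin.snoc_castSucc]; exact h1 _
  obtain ⟨u, hu, h0, h1⟩ := key n hn le_rfl
  have hunit : IsUnit (Matrix.of u) :=
    Matrix.linearIndependent_rows_iff_isUnit.mp hu
  refine ⟨Matrix.GeneralLinearGroup.mk'' (Matrix.of u)
    ((Matrix.isUnit_iff_isUnit_det _).mp hunit), ?_, ?_⟩
  · exact h0 (by omega)
  · exact h1 (by omega)

theorem pair_eta (s : Fin 2 → Fin n → ZMod p) : ![s 0, s 1] = s := by
  funext i; fin_cases i <;> rfl

theorem card_fiber [Fact p.Prime] (hn : 2 ≤ n) (v w : Fin n → ZMod p)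
    (hvw : LinearIndependent (ZMod p) ![v, w]) :
    Nat.card {s : {s : Fin 2 → Fin n → ZMod p // LinearIndependent (ZMod p) s} //
        wdg (s.1 0) (s.1 1) = wdg v w} =
      Nat.card {g : Matrix (Fin 2) (Fin 2) (ZMod p) // g.det = 1} := by
  refine (Nat.card_congr (Equiv.ofBijective
    (fun g => ⟨⟨![g.1 0 0 • v + g.1 0 1 • w, g.1 1 0 • v + g.1 1 1 • w], by
        refine li_comb hvw (a := g.1 0 0) (b := g.1 0 1) (c := g.1 1 0) (d := g.1 1 1) ?_
        rw [← Matrix.det_fin_two]; exact g.2⟩, by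
      simp only [Matrix.cons_val_zero, Matrix.cons_val_one, Matrix.head_cons]
      rw [wdg_comb, show g.1 0 0 * g.1 1 1 - g.1 0 1 * g.1 1 0 = 1 from by
        rw [← Matrix.det_fin_two]; exact g.2, one_smul]⟩)
    ⟨?_, ?_⟩)).symm
  · -- injective
    rintro ⟨g1, hg1⟩ ⟨g2, hg2⟩ heq
    simp only [Subtype.mk.injEq] at heq ⊢
    have h0 := congrFun heq 0
    have h1 := congrFun heq 1
    simp only [Matrix.cons_val_zero, Matrix.cons_val_one, Matrix.head_cons] at h0 h1
    rw [LinearIndependent.pair_iff] at hvw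
    have e0 : (g1 0 0 - g2 0 0) • v + (g1 0 1 - g2 0 1) • w = 0 := by
      linear_combination (norm := module) h0
    have e1 : (g1 1 0 - g2 1 0) • v + (g1 1 1 - g2 1 1) • w = 0 := by
      linear_combination (norm := module) h1
    obtain ⟨e00, e01⟩ := hvw _ _ e0
    obtain ⟨e10, e11⟩ := hvw _ _ e1
    ext i j
    fin_cases i <;> fin_cases j <;>
      first
        | (exact sub_eq_zero.mp e00) | (exact sub_eq_zero.mp e01)
        | (exact sub_eq_zero.mp e10) | (exact sub_eq_zero.mp e11)
  · -- surjective
    rintro ⟨⟨s, hs⟩, hw⟩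
    obtain ⟨A, hA0, hA1⟩ := exists_GL_rows hn s hs
    set B : Matrix (Fin n) (Fin n) (ZMod p) := (↑(A⁻¹) : Matrix (Fin n) (Fin n) (ZMod p)) with hB
    have hAB : (A : Matrix (Fin n) (Fin n) (ZMod p)) * B = 1 := A.mul_inv
    set x0 : Fin n → ZMod p := fun j => B j ⟨0, by omega⟩ with hx0
    set x1 : Fin n → ZMod p := fun j => B j ⟨1, by omega⟩ with hx1
    have hone : ∀ (i j : Fin n), ((A : Matrix (Fin n) (Fin n) (ZMod p)) * B) i j
        = (1 : Matrix (Fin n) (Fin n) (ZMod p)) i j := fun i j => by rw [hAB]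
    have d00 : s 0 ⬝ᵥ x0 = 1 := by
      have := hone ⟨0, by omega⟩ ⟨0, by omega⟩
      simpa [Matrix.mul_apply, dotProduct, hA0, Matrix.one_apply] using this
    have d10 : s 1 ⬝ᵥ x0 = 0 := by
      have := hone ⟨1, by omega⟩ ⟨0, by omega⟩
      simpa [Matrix.mul_apply, dotProduct, hA1, Matrix.one_apply, Fin.ext_iff] using this
    have d01 : s 0 ⬝ᵥ x1 = 0 := by
      have := hone ⟨0, by omega⟩ ⟨1, by omega⟩
      simpa [Matrix.mul_apply, dotProduct, hA0, Matrix.one_apply, Fin.ext_iff] using this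
    have d11 : s 1 ⬝ᵥ x1 = 1 := by
      have := hone ⟨1, by omega⟩ ⟨1, by omega⟩
      simpa [Matrix.mul_apply, dotProduct, hA1, Matrix.one_apply] using this
    have h1 := wdg_mulVec (s 0) (s 1) x0
    rw [hw, wdg_mulVec, d00, d10] at h1
    have h0 := wdg_mulVec (s 0) (s 1) x1
    rw [hw, wdg_mulVec, d01, d11] at h0
    set a : ZMod p := w ⬝ᵥ x1 with ha
    set b : ZMod p := -(v ⬝ᵥ x1) with hb
    set c : ZMod p := -(w ⬝ᵥ x0) with hc
    set d : ZMod p := v ⬝ᵥ x0 with hd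
    have hs0 : s 0 = a • v + b • w := by
      rw [ha, hb]; linear_combination (norm := module) h0
    have hs1 : s 1 = c • v + d • w := by
      rw [hc, hd]; linear_combination (norm := module) -h1
    have hdet : a * d - b * c = 1 := by
      have hwe : wdg (a • v + b • w) (c • v + d • w) = wdg v w := by
        rw [← hs0, ← hs1]; exact hw
      rw [wdg_comb] at hwe
      have : (a * d - b * c - 1) • wdg v w = 0 := by
        rw [sub_smul, hwe, one_smul, sub_self]
      rcases smul_eq_zero.mp this with h | h
      · linear_combination h
      · exact absurd h (wdg_ne_zero hvw)
    refine ⟨⟨!![a, b; c, d], by rw [Matrix.det_fin_two_of]; exact hdet⟩, ?_⟩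
    apply Subtype.ext
    apply Subtype.ext
    simp only
    rw [show (!![a, b; c, d] : Matrix (Fin 2) (Fin 2) (ZMod p)) 0 0 = a from rfl,
      show (!![a, b; c, d] : Matrix (Fin 2) (Fin 2) (ZMod p)) 0 1 = b from rfl,
      show (!![a, b; c, d] : Matrix (Fin 2) (Fin 2) (ZMod p)) 1 0 = c from rfl,
      show (!![a, b; c, d] : Matrix (Fin 2) (Fin 2) (ZMod p)) 1 1 = d from rfl]
    rw [← hs0, ← hs1]
    exact pair_eta s

theorem card_SL2 (p : ℕ) [Fact p.Prime] :
    Nat.card {g : Matrix (Fin 2) (Fin 2) (ZMod p) // g.det = 1} = p ^ 3 - p := by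
  set D := (Matrix.GeneralLinearGroup.det : GL (Fin 2) (ZMod p) →* (ZMod p)ˣ) with hD
  have hker : Nat.card {g : Matrix (Fin 2) (Fin 2) (ZMod p) // g.det = 1} = Nat.card D.ker := by
    refine Nat.card_congr ⟨fun g => ⟨Matrix.GeneralLinearGroup.mk'' g.1
        (by rw [g.2]; exact isUnit_one), ?_⟩,
      fun a => ⟨(a.1 : Matrix (Fin 2) (Fin 2) (ZMod p)), ?_⟩, fun g => rfl, fun a => ?_⟩
    · have : D (Matrix.GeneralLinearGroup.mk'' g.1 (by rw [g.2]; exact isUnit_one)) = 1 := by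
        apply Units.ext
        exact g.2
      exact this
    · have := a.2
      rw [MonoidHom.mem_ker] at this
      have := congrArg Units.val this
      simpa [hD] using this
    · apply Subtype.ext; apply Units.ext; rfl
  rw [hker]
  have hsurj : Function.Surjective D := by
    intro u
    have hdet : IsUnit (Matrix.diagonal ![(u : ZMod p), 1]).det := by
      rw [Matrix.det_diagonal]
      simp [Fin.prod_univ_two]
    refine ⟨Matrix.GeneralLinearGroup.mk'' _ hdet, ?_⟩
    apply Units.ext
    show (Matrix.diagonal ![(u : ZMod p), 1]).det = ↑u
    simp [Fin.prod_univ_two]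
  have h1 : Nat.card (GL (Fin 2) (ZMod p)) =
      Nat.card (GL (Fin 2) (ZMod p) ⧸ D.ker) * Nat.card D.ker :=
    Subgroup.card_eq_card_quotient_mul_card_subgroup D.ker
  have h2 : Nat.card (GL (Fin 2) (ZMod p) ⧸ D.ker) = Nat.card (ZMod p)ˣ := by
    rw [Nat.card_congr (QuotientGroup.quotientKerEquivRange D).toEquiv]
    rw [Nat.card_congr (Equiv.subtypeUnivEquiv (by
      intro u; rw [MonoidHom.range_eq_top.mpr hsurj]; trivial))]
  have hGL : Nat.card (GL (Fin 2) (ZMod p)) = (p ^ 2 - 1) * (p ^ 2 - p) := by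
    rw [Matrix.card_GL_field]
    simp [Fin.prod_univ_two, ZMod.card]
  have hU : Nat.card (ZMod p)ˣ = p - 1 := by
    rw [Nat.card_eq_fintype_card, ZMod.card_units_eq_totient, Nat.totient_prime Fact.out]
  rw [h2, hU, hGL] at h1
  have hp2 : 2 ≤ p := (Fact.out : p.Prime).two_le
  have key : (p ^ 2 - 1) * (p ^ 2 - p) = (p - 1) * (p ^ 3 - p) := by
    have e1 : 1 ≤ p ^ 2 := Nat.one_le_pow _ _ (by omega)
    have e2 : p ≤ p ^ 2 := by nlinarith
    have e3 : p ≤ p ^ 3 := by nlinarith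
    have e4 : 1 ≤ p := by omega
    zify [e1, e2, e3, e4]
    ring
  rw [key] at h1
  exact (Nat.eq_of_mul_eq_mul_left (by omega) h1).symm

theorem card_eq_fiber {α β : Type*} [Finite α] [Finite β] (f : α → β) (k : ℕ)
    (h : ∀ b : β, Nat.card {a : α // f a = b} = k) : Nat.card α = Nat.card β * k := by
  have := Fintype.ofFinite α
  have := Fintype.ofFinite β
  classical
  rw [Nat.card_eq_fintype_card, Nat.card_eq_fintype_card (α := β)]
  calc Fintype.card α = Fintype.card (Σ b : β, {a : α // f a = b}) :=
        Fintype.card_congr (Equiv.sigmaFiberEquiv f).symm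
    _ = ∑ b : β, Fintype.card {a : α // f a = b} := Fintype.card_sigma
    _ = ∑ _b : β, k := by
        refine Finset.sum_congr rfl fun b _ => ?_
        rw [← Nat.card_eq_fintype_card]; exact h b
    _ = Fintype.card β * k := by
        rw [Finset.sum_const, smul_eq_mul, Finset.card_univ]

end CardOrbitAux

/-- The standard rank-2 skew-symmetric matrix `D_n(1)` over `ℤ/p`: entry `1` at
position `(2,1)`, `-1` at position `(1,2)` (0-indexed: `(1,0)` and `(0,1)`),
zeros elsewhere. -/
def DnOne (n : ℕ) (p : ℕ) : Matrix (Fin n) (Fin n) (ZMod p) :=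
  Matrix.of fun i j =>
    if (i : ℕ) = 1 ∧ (j : ℕ) = 0 then 1
    else if (i : ℕ) = 0 ∧ (j : ℕ) = 1 then -1
    else 0

section Main

variable {p n : ℕ}

theorem DnOne_eq_wdg (hn : 2 ≤ n) :
    DnOne n p = wdg (Pi.single ⟨0, by omega⟩ 1) (Pi.single ⟨1, by omega⟩ 1) := by
  ext i j
  simp only [DnOne, wdg, Matrix.of_apply, Pi.single_apply, Fin.ext_iff]
  split_ifs <;> simp_all

theorem vecMul_single' (A : Matrix (Fin n) (Fin n) (ZMod p)) (i : Fin n) :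
    (Pi.single i (1 : ZMod p)) ᵥ* A = A i := by
  funext j
  simp [Matrix.vecMul, dotProduct, Pi.single_apply]

theorem congr_DnOne (hn : 2 ≤ n) (A : Matrix (Fin n) (Fin n) (ZMod p)) :
    Aᵀ * DnOne n p * A = wdg (A ⟨0, by omega⟩) (A ⟨1, by omega⟩) := by
  rw [DnOne_eq_wdg hn, wdg_congr, vecMul_single', vecMul_single']

theorem orbit_eq [Fact p.Prime] (hn : 2 ≤ n) :
    {D' : Matrix (Fin n) (Fin n) (ZMod p) |
        ∃ A : Matrix.GeneralLinearGroup (Fin n) (ZMod p),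
          D' = Matrix.transpose (A : Matrix (Fin n) (Fin n) (ZMod p)) * DnOne n p *
            (A : Matrix (Fin n) (Fin n) (ZMod p))} =
      Set.range (fun s : {s : Fin 2 → Fin n → ZMod p // LinearIndependent (ZMod p) s} =>
        wdg (s.1 0) (s.1 1)) := by
  ext D'
  constructor
  · rintro ⟨A, rfl⟩
    have hrows : LinearIndependent (ZMod p) (fun i => (A : Matrix (Fin n) (Fin n) (ZMod p)) i) :=
      Matrix.linearIndependent_rows_iff_isUnit.mpr A.isUnit
    have hcomp : ![(A : Matrix (Fin n) (Fin n) (ZMod p)) ⟨0, by omega⟩,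
        (A : Matrix (Fin n) (Fin n) (ZMod p)) ⟨1, by omega⟩] =
        (fun i => (A : Matrix (Fin n) (Fin n) (ZMod p)) i) ∘
          ![⟨0, by omega⟩, ⟨1, by omega⟩] := by
      funext i; fin_cases i <;> rfl
    have hli : LinearIndependent (ZMod p) ![(A : Matrix (Fin n) (Fin n) (ZMod p)) ⟨0, by omega⟩,
        (A : Matrix (Fin n) (Fin n) (ZMod p)) ⟨1, by omega⟩] := by
      rw [hcomp]
      refine hrows.comp _ ?_
      intro x y hxy
      fin_cases x <;> fin_cases y <;> simp_all [Fin.ext_iff]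
    exact ⟨⟨![(A : Matrix (Fin n) (Fin n) (ZMod p)) ⟨0, by omega⟩,
        (A : Matrix (Fin n) (Fin n) (ZMod p)) ⟨1, by omega⟩], hli⟩, by
      simp only [Matrix.cons_val_zero, Matrix.cons_val_one, Matrix.head_cons]
      exact (congr_DnOne hn _).symm⟩
  · rintro ⟨⟨s, hs⟩, rfl⟩
    obtain ⟨A, hA0, hA1⟩ := exists_GL_rows hn s hs
    exact ⟨A, by rw [congr_DnOne hn, hA0, hA1]⟩

end Main

/-- For `p` prime and `n ≥ 2`, the orbit of `D_n(1)` under the congruence action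
`D ↦ Aᵀ D A` of `GL(n, ℤ/p)` has cardinality `(p^{n-1} − 1)(p^n − 1)/(p² − 1)`. -/
theorem card_orbit_DnOne (p n : ℕ) (hp : Nat.Prime p) (hn : 2 ≤ n) :
    (Nat.card {D' : Matrix (Fin n) (Fin n) (ZMod p) |
        ∃ A : Matrix.GeneralLinearGroup (Fin n) (ZMod p),
          D' = Matrix.transpose (A : Matrix (Fin n) (Fin n) (ZMod p)) * DnOne n p *
            (A : Matrix (Fin n) (Fin n) (ZMod p))} : ℚ) =
      ((p : ℚ) ^ (n - 1) - 1) * ((p : ℚ) ^ n - 1) / ((p : ℚ) ^ 2 - 1) := by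
  haveI : Fact p.Prime := ⟨hp⟩
  rw [orbit_eq hn]
  set T := {s : Fin 2 → Fin n → ZMod p // LinearIndependent (ZMod p) s} with hT
  set F : T → Matrix (Fin n) (Fin n) (ZMod p) := fun s => wdg (s.1 0) (s.1 1) with hF
  -- count of linearly independent pairs
  have hcardT : Nat.card T = (p ^ n - 1) * (p ^ n - p) := by
    have := card_linearIndependent (K := ZMod p) (V := Fin n → ZMod p) (k := 2)
      (by rw [Module.finrank_fintype_fun_eq_card, Fintype.card_fin]; omega)
    rw [hT, this, Module.finrank_fintype_fun_eq_card, Fintype.card_fin, ZMod.card,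
      Fin.prod_univ_two]
    norm_num
  -- each fiber of F over its range has the cardinality of SL₂
  have hfib : ∀ b : Set.range F, Nat.card {s : T // (fun s => (⟨F s, Set.mem_range_self s⟩ :
      Set.range F)) s = b} = p ^ 3 - p := by
    rintro ⟨_, s0, rfl⟩
    have hvw : LinearIndependent (ZMod p) ![s0.1 0, s0.1 1] := by
      rw [pair_eta]; exact s0.2
    have := card_fiber hn (s0.1 0) (s0.1 1) hvw
    rw [← card_SL2 p]
    rw [← this]
    apply Nat.card_congr
    apply Equiv.subtypeEquivRight
    intro s
    rw [Subtype.ext_iff]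
  have hdecomp : Nat.card T = Nat.card (Set.range F) * (p ^ 3 - p) :=
    card_eq_fiber (fun s => (⟨F s, Set.mem_range_self s⟩ : Set.range F)) _ hfib
  rw [hcardT] at hdecomp
  -- arithmetic
  have hp2 : 2 ≤ p := hp.two_le
  obtain ⟨m, rfl⟩ : ∃ m, n = m + 1 := ⟨n - 1, by omega⟩
  have b1 : 1 ≤ p ^ (m + 1) := Nat.one_le_pow _ _ (by omega)
  have b2 : p ≤ p ^ (m + 1) := Nat.le_self_pow (by omega) p
  have b3 : p ≤ p ^ 3 := Nat.le_self_pow (by omega) p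
  have hQ : ((p : ℚ) ^ (m + 1) - 1) * ((p : ℚ) ^ (m + 1) - p) =
      (Nat.card (Set.range F) : ℚ) * ((p : ℚ) ^ 3 - p) := by
    have := congrArg (fun x : ℕ => (x : ℚ)) hdecomp
    push_cast [Nat.cast_sub b1, Nat.cast_sub b2, Nat.cast_sub b3] at this
    convert this using 2 <;> push_cast <;> ring
  have hpQ : (p : ℚ) ≠ 0 := by
    have : (2 : ℚ) ≤ (p : ℚ) := by exact_mod_cast hp2
    linarith
  have hne : (p : ℚ) ^ 2 - 1 ≠ 0 := by
    have : (2 : ℚ) ≤ (p : ℚ) := by exact_mod_cast hp2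
    nlinarith
  rw [eq_div_iff hne]
  apply mul_left_cancel₀ hpQ
  have hm1 : m + 1 - 1 = m := by omega
  rw [hm1]
  linear_combination -hQ
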